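/- Let x ∈ X and suppose S : X → U satisfies B(S(x̃), w̃; x̃) = L(w̃) for all w̃ ∈ W and all x̃ ∈ X, that u := S(x) is the unique element of U with B(u, w̃; x) = L(w̃) for all w̃ ∈ W, and that S is Fréchet differentiable at x with derivative S'(x) : X → U. Assume the qualification conditions: there is c > 0 such that for every w' ∈ W, sup over (h_x,h_u) with ‖(h_x,h_u)‖ = 1 of B_x(u,w';h_x) + B_u(h_u,w';x) is at least c‖w'‖; and whenever B_u(ũ,w';x) = 0 for all ũ ∈ U, then B_x(u,w';x) = 0. Then for every z ∈ U and every w ∈ W satisfying the weak adjoint equation B_u(ũ, w; x) = −⟨z, ũ⟩ for all ũ ∈ U, the Hilbert-space adjoint of the derivative satisfies S'(x)* z = ∇̄_xB(u, w). -/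

import Mathlib

local notation "⟪" x ", " y "⟫" => @inner ℝ _ _ x y

/-- Adjoint of the derivative of the PDE solution operator in terms of the
solution of the weak adjoint PDE (Corollary 2.6). -/
theorem adjoint_of_solution_operator_derivative
    {X U W : Type*}
    [NormedAddCommGroup X] [InnerProductSpace ℝ X] [CompleteSpace X]
    [NormedAddCommGroup U] [InnerProductSpace ℝ U] [CompleteSpace U]
    [NormedAddCommGroup W] [InnerProductSpace ℝ W] [CompleteSpace W]
    (L : W →L[ℝ] ℝ)
    (b₀ : W →L[ℝ] ℝ) (b₁ : U →L[ℝ] W →L[ℝ] ℝ)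
    (b₂ : W →L[ℝ] X →L[ℝ] ℝ) (b₃ : U →L[ℝ] W →L[ℝ] X →L[ℝ] ℝ)
    -- B and its partial parts
    (Bf Bx Bu : U → W → X → ℝ)
    (hBf : ∀ u w x, Bf u w x = b₀ w + b₁ u w + b₂ w x + b₃ u w x)
    (hBx : ∀ u w x, Bx u w x = b₂ w x + b₃ u w x)
    (hBu : ∀ u w x, Bu u w x = b₁ u w + b₃ u w x)
    -- the solution operator S and the point x
    (S : X → U) (x : X)
    (hS : ∀ (x' : X) (wt : W), Bf (S x') wt x' = L wt)
    (huniq : ∀ u' : U, (∀ wt : W, Bf u' wt x = L wt) → u' = S x)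
    (S' : X →L[ℝ] U) (hS' : HasFDerivAt S S' x)
    -- qualification conditions
    (c : ℝ) (hc : 0 < c)
    (hcq1 : ∀ w' : W, c * ‖w'‖ ≤
      sSup ((fun h : X × U => Bx (S x) w' h.1 + Bu h.2 w' x) ''
        {h : X × U | ‖h‖ = 1}))
    (hcq2 : ∀ w' : W, (∀ ut : U, Bu ut w' x = 0) → Bx (S x) w' x = 0) :
    ∀ (z : U) (w : W), (∀ ut : U, Bu ut w x = -⟪z, ut⟫) →
      ContinuousLinearMap.adjoint S' z
        = (InnerProductSpace.toDual ℝ X).symm (b₂ w + b₃ (S x) w) := by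
  intro z w hw
  -- key identity from differentiating the state equation
  have key : ∀ (wt : W) (h : X),
      b₁ (S' h) wt + b₂ wt h + (b₃ (S x) wt h + b₃ (S' h) wt x) = 0 := by
    intro wt h
    set m : U →L[ℝ] X →L[ℝ] ℝ := b₃.flip wt with hm
    have hbil : IsBoundedBilinearMap ℝ (fun p : U × X => m p.1 p.2) :=
      m.isBoundedBilinearMap
    have hpair : HasFDerivAt (fun x' : X => (S x', x'))
        (S'.prod (ContinuousLinearMap.id ℝ X)) x :=
      HasFDerivAt.prodMk hS' (hasFDerivAt_id x)
    have h3 : HasFDerivAt (fun x' : X => m (S x') x')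
        ((hbil.deriv (S x, x)).comp (S'.prod (ContinuousLinearMap.id ℝ X))) x := by
      simpa [Function.comp_def] using (hbil.hasFDerivAt (S x, x)).comp (f := fun x' : X => (S x', x')) x hpair
    have h1 : HasFDerivAt (fun x' : X => b₁ (S x') wt)
        ((b₁.flip wt).comp S') x :=
      (b₁.flip wt).hasFDerivAt.comp x hS'
    have h2 : HasFDerivAt (fun x' : X => b₂ wt x') (b₂ wt) x :=
      (b₂ wt).hasFDerivAt
    have hF : HasFDerivAt (fun x' : X => Bf (S x') wt x')
        (((b₁.flip wt).comp S') + (b₂ wt) +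
          ((hbil.deriv (S x, x)).comp (S'.prod (ContinuousLinearMap.id ℝ X)))) x := by
      have : HasFDerivAt (fun x' : X =>
          b₀ wt + b₁ (S x') wt + b₂ wt x' + b₃ (S x') wt x')
          ((0 : X →L[ℝ] ℝ) + ((b₁.flip wt).comp S') + (b₂ wt) +
            ((hbil.deriv (S x, x)).comp (S'.prod (ContinuousLinearMap.id ℝ X)))) x := by
        exact (((hasFDerivAt_const (b₀ wt) x).add h1).add h2).add h3
      simpa [hBf] using this
    have hF0 : HasFDerivAt (fun x' : X => Bf (S x') wt x') (0 : X →L[ℝ] ℝ) x := by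
      have : (fun x' : X => Bf (S x') wt x') = fun _ => L wt := by
        funext x'; exact hS x' wt
      rw [this]; exact hasFDerivAt_const _ x
    have hzero := hF.unique hF0
    have := congrArg (fun f : X →L[ℝ] ℝ => f h) hzero
    simpa [IsBoundedBilinearMap.deriv_apply, hm] using this
  apply ext_inner_right ℝ
  intro h
  rw [ContinuousLinearMap.adjoint_inner_left, InnerProductSpace.toDual_symm_apply]
  have h1 := hw (S' h)
  rw [hBu] at h1
  have h2 := key w h
  simp only [ContinuousLinearMap.add_apply]
  linarith
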